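/- arXiv:1612.08741 — 2 statements merged into one kernel-verified Lean document; each statement's English description precedes it below -/
import Mathlib

section
/- Let (X₁, X₂) be random vectors in ({0,1}ⁿ)² with joint law 𝒫, let π denote the uniform distribution on {0,1}ⁿ, and let N = #{x ∈ [n] : (X₁(x), X₂(x)) = (0,1)}. Then 𝒫(|N − n/4| ≥ n/8) ≤ 6 e^{−n/72} + d_TV(X₁, π) + d_TV(X₂, π) + d_TV(X₁ + X₂, π), where X₁ + X₂ denotes coordinatewise addition mod 2. -/
open Finset

/-- Total variation distance between the pushforward of the probability mass function `P`
under `g` and the uniform distribution on the (finite) codomain. -/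
noncomputable def pushTVUnif {α β : Type*} [Fintype α] [Fintype β] [DecidableEq β]
    (P : α → ℝ) (g : α → β) : ℝ :=
  (1 / 2) * ∑ z : β,
    |(∑ y ∈ Finset.univ.filter (fun y => g y = z), P y) - 1 / (Fintype.card β : ℝ)|

noncomputable def sgn (b : Bool) : ℝ := if b then -1 else 1

lemma sgn_mgf {n : ℕ} (t : ℝ) :
    ∑ v : Fin n → Bool, Real.exp (∑ x, t * sgn (v x)) = (Real.exp t + Real.exp (-t)) ^ n := by
  simp_rw [Real.exp_sum]
  rw [← Fintype.prod_sum (fun (_ : Fin n) (b : Bool) => Real.exp (t * sgn b))]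
  have : ∑ b : Bool, Real.exp (t * sgn b) = Real.exp t + Real.exp (-t) := by
    have hT : sgn true = -1 := rfl
    have hF : sgn false = 1 := rfl
    rw [Fintype.sum_bool, hT, hF, mul_neg_one, mul_one, add_comm]
  rw [this]
  simp

lemma tail_aux (n : ℕ) (a t s : ℝ) (ht : 0 ≤ t) (hs : s = 1 ∨ s = -1) :
    ((Finset.univ.filter fun v : Fin n → Bool => a ≤ s * ∑ x, sgn (v x)).card : ℝ)
        * Real.exp (t * a) ≤ (Real.exp t + Real.exp (-t)) ^ n := by
  have hmgf : ∑ v : Fin n → Bool, Real.exp (∑ x, (t * s) * sgn (v x))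
      = (Real.exp t + Real.exp (-t)) ^ n := by
    rcases hs with h | h <;> rw [h] <;> simp [sgn_mgf] <;> rw [add_comm] <;>
      simpa using sgn_mgf (n := n) (-t)
  calc ((Finset.univ.filter fun v : Fin n → Bool => a ≤ s * ∑ x, sgn (v x)).card : ℝ)
        * Real.exp (t * a)
      = ∑ _v ∈ Finset.univ.filter (fun v : Fin n → Bool => a ≤ s * ∑ x, sgn (v x)),
          Real.exp (t * a) := by rw [Finset.sum_const, nsmul_eq_mul]
    _ ≤ ∑ v ∈ Finset.univ.filter (fun v : Fin n → Bool => a ≤ s * ∑ x, sgn (v x)),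
          Real.exp (∑ x, (t * s) * sgn (v x)) := by
        apply Finset.sum_le_sum
        intro v hv
        rw [Finset.mem_filter] at hv
        apply Real.exp_le_exp.2
        have : ∑ x, (t * s) * sgn (v x) = t * (s * ∑ x, sgn (v x)) := by
          simp only [Finset.mul_sum]
          exact Finset.sum_congr rfl fun i _ => by ring
        rw [this]
        exact mul_le_mul_of_nonneg_left hv.2 ht
    _ ≤ ∑ v : Fin n → Bool, Real.exp (∑ x, (t * s) * sgn (v x)) := by
        apply Finset.sum_le_sum_of_subset_of_nonneg (Finset.filter_subset _ _)
        intro v _ _; positivity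
    _ = (Real.exp t + Real.exp (-t)) ^ n := hmgf

lemma unif_tail (n : ℕ) :
    ((Finset.univ.filter fun v : Fin n → Bool => (n : ℝ) / 6 ≤ |∑ x, sgn (v x)|).card : ℝ)
      ≤ (2 : ℝ) ^ n * (2 * Real.exp (-(n : ℝ) / 72)) := by
  set a : ℝ := (n : ℝ) / 6
  have hsub : (Finset.univ.filter fun v : Fin n → Bool => a ≤ |∑ x, sgn (v x)|)
      ⊆ (Finset.univ.filter fun v : Fin n → Bool => a ≤ (1 : ℝ) * ∑ x, sgn (v x))
        ∪ (Finset.univ.filter fun v : Fin n → Bool => a ≤ (-1 : ℝ) * ∑ x, sgn (v x)) := by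
    intro v hv
    rw [Finset.mem_filter] at hv
    rcases abs_cases (∑ x, sgn (v x)) with ⟨h, _⟩ | ⟨h, _⟩
    · exact Finset.mem_union_left _ (Finset.mem_filter.2 ⟨Finset.mem_univ _, by
        rw [one_mul]; rw [h] at hv; exact hv.2⟩)
    · exact Finset.mem_union_right _ (Finset.mem_filter.2 ⟨Finset.mem_univ _, by
        rw [neg_one_mul]; rw [h] at hv; exact hv.2⟩)
  have hcard : ((Finset.univ.filter fun v : Fin n → Bool => a ≤ |∑ x, sgn (v x)|).card : ℝ)
      ≤ ((Finset.univ.filter fun v : Fin n → Bool => a ≤ (1:ℝ) * ∑ x, sgn (v x)).card : ℝ)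
        + ((Finset.univ.filter fun v : Fin n → Bool => a ≤ (-1:ℝ) * ∑ x, sgn (v x)).card : ℝ) := by
    have := Finset.card_le_card hsub
    have h2 := Finset.card_union_le
      (Finset.univ.filter fun v : Fin n → Bool => a ≤ (1:ℝ) * ∑ x, sgn (v x))
      (Finset.univ.filter fun v : Fin n → Bool => a ≤ (-1:ℝ) * ∑ x, sgn (v x))
    exact_mod_cast le_trans this h2
  -- single-tail bound
  have hone : ∀ s : ℝ, s = 1 ∨ s = -1 →
      ((Finset.univ.filter fun v : Fin n → Bool => a ≤ s * ∑ x, sgn (v x)).card : ℝ)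
        ≤ (2 : ℝ) ^ n * Real.exp (-(n : ℝ) / 72) := by
    intro s hs
    have h := tail_aux n a (1/6) s (by norm_num) hs
    have hexp : (Real.exp (1/6) + Real.exp (-(1/6))) ^ n
        ≤ (2 : ℝ) ^ n * Real.exp ((n : ℝ) / 72) := by
      have hc : Real.exp (1/6) + Real.exp (-(1/6)) = 2 * Real.cosh (1/6) := by
        rw [Real.cosh_eq]; ring
      have hcb : Real.cosh (1/6 : ℝ) ≤ Real.exp (((1:ℝ)/6) ^ 2 / 2) :=
        Real.cosh_le_exp_half_sq _
      have h72 : ((1:ℝ)/6) ^ 2 / 2 = 1/72 := by norm_num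
      have hcn : Real.cosh (1/6 : ℝ) ^ n ≤ Real.exp ((n : ℝ) / 72) := by
        calc Real.cosh (1/6 : ℝ) ^ n ≤ (Real.exp (1/72)) ^ n :=
              pow_le_pow_left₀ (Real.cosh_pos _).le (h72 ▸ hcb) n
          _ = Real.exp ((n : ℝ) * (1/72)) := (Real.exp_nat_mul _ n).symm
          _ = Real.exp ((n : ℝ) / 72) := by rw [mul_one_div]
      rw [hc, mul_pow]
      exact mul_le_mul_of_nonneg_left hcn (by positivity)
    have hpos : (0:ℝ) < Real.exp ((1:ℝ)/6 * a) := Real.exp_pos _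
    have key : ((Finset.univ.filter fun v : Fin n → Bool => a ≤ s * ∑ x, sgn (v x)).card : ℝ)
        ≤ (2 : ℝ) ^ n * Real.exp ((n : ℝ) / 72) / Real.exp ((1:ℝ)/6 * a) :=
      (le_div_iff₀ hpos).2 (le_trans h hexp)
    calc ((Finset.univ.filter fun v : Fin n → Bool => a ≤ s * ∑ x, sgn (v x)).card : ℝ)
        ≤ (2 : ℝ) ^ n * Real.exp ((n : ℝ) / 72) / Real.exp ((1:ℝ)/6 * a) := key
      _ = (2 : ℝ) ^ n * Real.exp (-(n : ℝ) / 72) := by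
          rw [div_eq_iff hpos.ne', mul_assoc, ← Real.exp_add]
          congr 1
          rw [Real.exp_eq_exp]
          rw [show a = (n : ℝ) / 6 from rfl]
          ring
  have h1 := hone 1 (Or.inl rfl)
  have h2 := hone (-1) (Or.inr rfl)
  calc ((Finset.univ.filter fun v : Fin n → Bool => a ≤ |∑ x, sgn (v x)|).card : ℝ)
      ≤ _ + _ := hcard
    _ ≤ (2:ℝ)^n * Real.exp (-(n:ℝ)/72) + (2:ℝ)^n * Real.exp (-(n:ℝ)/72) := add_le_add h1 h2
    _ = (2:ℝ)^n * (2 * Real.exp (-(n:ℝ)/72)) := by ring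

lemma event_le_unif_add_tv {α β : Type*} [Fintype α] [Fintype β] [DecidableEq β]
    (P : α → ℝ) (hP0 : ∀ y, 0 ≤ P y) (hP1 : ∑ y, P y = 1)
    (g : α → β) (Q : β → Prop) [DecidablePred Q] :
    ∑ y ∈ Finset.univ.filter (fun y => Q (g y)), P y
      ≤ ((Finset.univ.filter Q).card : ℝ) / (Fintype.card β : ℝ) + pushTVUnif P g := by
  classical
  have hcardβ : (0 : ℝ) < (Fintype.card β : ℝ) := by
    have : 0 < Fintype.card β := by
      rcases isEmpty_or_nonempty β with h | h
      · exfalso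
        have : IsEmpty α := ⟨fun a => (h.elim (g a))⟩
        rw [Finset.univ_eq_empty (α := α), Finset.sum_empty] at hP1
        norm_num at hP1
      · exact Fintype.card_pos
    exact_mod_cast this
  set u : ℝ := 1 / (Fintype.card β : ℝ) with hu
  set p : β → ℝ := fun z => ∑ y ∈ Finset.univ.filter (fun y => g y = z), P y with hp
  have hsum : ∑ z : β, p z = 1 := by
    rw [hp]
    rw [Finset.sum_fiberwise_of_maps_to (fun y _ => Finset.mem_univ (g y)) P]
    exact hP1
  have hzero : ∑ z : β, (p z - u) = 0 := by
    rw [Finset.sum_sub_distrib, hsum, Finset.sum_const, nsmul_eq_mul, Finset.card_univ, hu]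
    field_simp
    norm_num
  have hstep : ∑ y ∈ Finset.univ.filter (fun y => Q (g y)), P y
      = ∑ z ∈ Finset.univ.filter Q, p z := by
    rw [hp]
    rw [Finset.sum_fiberwise_eq_sum_filter Finset.univ (Finset.univ.filter Q) g P]
    apply Finset.sum_congr
    · ext y; simp
    · intros; rfl
  have hmax_eq : ∑ z : β, max (p z - u) 0 = pushTVUnif P g := by
    have hterm : ∀ z : β, max (p z - u) 0 = ((p z - u) + |p z - u|) / 2 := by
      intro z
      rcases le_or_gt 0 (p z - u) with h | h
      · rw [max_eq_left h, abs_of_nonneg h]; ring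
      · rw [max_eq_right h.le, abs_of_neg h]; ring
    calc ∑ z : β, max (p z - u) 0 = ∑ z : β, ((p z - u) + |p z - u|) / 2 :=
          Finset.sum_congr rfl fun z _ => hterm z
      _ = (∑ z : β, ((p z - u) + |p z - u|)) / 2 := by rw [Finset.sum_div]
      _ = ((∑ z : β, (p z - u)) + ∑ z : β, |p z - u|) / 2 := by rw [Finset.sum_add_distrib]
      _ = (∑ z : β, |p z - u|) / 2 := by rw [hzero]; ring
      _ = pushTVUnif P g := by
          simp only [pushTVUnif, hp, hu]
          ring
  calc ∑ y ∈ Finset.univ.filter (fun y => Q (g y)), P y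
      = ∑ z ∈ Finset.univ.filter Q, p z := hstep
    _ = ∑ z ∈ Finset.univ.filter Q, u + ∑ z ∈ Finset.univ.filter Q, (p z - u) := by
        rw [← Finset.sum_add_distrib]; apply Finset.sum_congr rfl; intros; ring
    _ ≤ ∑ z ∈ Finset.univ.filter Q, u + ∑ z ∈ Finset.univ.filter Q, max (p z - u) 0 := by
        gcongr with z hz
        exact le_max_left _ _
    _ ≤ ∑ z ∈ Finset.univ.filter Q, u + ∑ z : β, max (p z - u) 0 := by
        have hmono : ∑ z ∈ Finset.univ.filter Q, max (p z - u) 0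
            ≤ ∑ z : β, max (p z - u) 0 :=
          Finset.sum_le_sum_of_subset_of_nonneg (Finset.filter_subset _ _)
            (fun z _ _ => le_max_right _ _)
        linarith
    _ = ((Finset.univ.filter Q).card : ℝ) / (Fintype.card β : ℝ) + pushTVUnif P g := by
        rw [hmax_eq, Finset.sum_const, nsmul_eq_mul, hu]
        ring

lemma key_id (n : ℕ) (y : (Fin n → Bool) × (Fin n → Bool)) :
    4 * (((Finset.univ.filter fun x : Fin n =>
        y.1 x = false ∧ y.2 x = true).card : ℝ)) - (n : ℝ)
      = (∑ x, sgn (y.1 x)) - (∑ x, sgn (y.2 x)) - (∑ x, sgn (xor (y.1 x) (y.2 x))) := by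
  classical
  have hN : (((Finset.univ.filter fun x : Fin n =>
      y.1 x = false ∧ y.2 x = true).card : ℝ))
      = ∑ x : Fin n, (if y.1 x = false ∧ y.2 x = true then (1 : ℝ) else 0) := by
    rw [Finset.card_filter]
    push_cast
    apply Finset.sum_congr rfl
    intro x _
    split_ifs <;> norm_num
  have hn : (n : ℝ) = ∑ _x : Fin n, (1 : ℝ) := by simp
  rw [hN, hn, Finset.mul_sum, ← Finset.sum_sub_distrib, ← Finset.sum_sub_distrib,
    ← Finset.sum_sub_distrib]
  apply Finset.sum_congr rfl
  intro x _
  cases h1 : y.1 x <;> cases h2 : y.2 x <;> simp [sgn] <;> norm_num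

lemma key_cases (n : ℕ) (y : (Fin n → Bool) × (Fin n → Bool))
    (h : (n : ℝ) / 8 ≤
        |(((Finset.univ.filter fun x : Fin n =>
            y.1 x = false ∧ y.2 x = true).card : ℝ)) - (n : ℝ) / 4|) :
    (n : ℝ) / 6 ≤ |∑ x, sgn (y.1 x)| ∨ (n : ℝ) / 6 ≤ |∑ x, sgn (y.2 x)| ∨
      (n : ℝ) / 6 ≤ |∑ x, sgn (xor (y.1 x) (y.2 x))| := by
  by_contra hcon
  push_neg at hcon
  obtain ⟨h1, h2, h3⟩ := hcon
  set N : ℝ := ((Finset.univ.filter fun x : Fin n =>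
      y.1 x = false ∧ y.2 x = true).card : ℝ) with hNdef
  have hid := key_id n y
  have habs : |4 * N - (n : ℝ)| ≤ |∑ x, sgn (y.1 x)| + |∑ x, sgn (y.2 x)|
      + |∑ x, sgn (xor (y.1 x) (y.2 x))| := by
    rw [hid]
    calc |(∑ x, sgn (y.1 x)) - (∑ x, sgn (y.2 x)) - (∑ x, sgn (xor (y.1 x) (y.2 x)))|
        ≤ |(∑ x, sgn (y.1 x)) - (∑ x, sgn (y.2 x))| + |∑ x, sgn (xor (y.1 x) (y.2 x))| :=
          abs_sub _ _
      _ ≤ |∑ x, sgn (y.1 x)| + |∑ x, sgn (y.2 x)| + |∑ x, sgn (xor (y.1 x) (y.2 x))| := by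
          gcongr
          exact abs_sub _ _
  have h4 : (n : ℝ) / 2 ≤ |4 * N - (n : ℝ)| := by
    have heq : |4 * N - (n : ℝ)| = 4 * |N - (n : ℝ) / 4| := by
      rw [show 4 * N - (n : ℝ) = 4 * (N - (n : ℝ) / 4) by ring, abs_mul,
        abs_of_nonneg (by norm_num : (0:ℝ) ≤ 4)]
    rw [heq]
    linarith
  linarith

/-- For a random pair `(X₁,X₂)` of vectors in `{0,1}ⁿ` with joint law `P` and
`N = #{x : (X₁(x),X₂(x)) = (0,1)}`,
`P(|N − n/4| ≥ n/8) ≤ 6e^{−n/72} + d_TV(X₁,π) + d_TV(X₂,π) + d_TV(X₁+X₂,π)`,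
where `π` is uniform on `{0,1}ⁿ` and `X₁+X₂` is coordinatewise addition mod 2. -/
theorem pattern_concentration_two (n : ℕ)
    (P : ((Fin n → Bool) × (Fin n → Bool)) → ℝ)
    (hP0 : ∀ y, 0 ≤ P y) (hP1 : ∑ y, P y = 1) :
    ∑ y ∈ Finset.univ.filter
        (fun y : (Fin n → Bool) × (Fin n → Bool) =>
          (n : ℝ) / 8 ≤
            |(((Finset.univ.filter fun x : Fin n =>
                y.1 x = false ∧ y.2 x = true).card : ℝ)) - (n : ℝ) / 4|), P y
      ≤ 6 * Real.exp (-(n : ℝ) / 72) +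
        pushTVUnif P (fun y => y.1) +
        pushTVUnif P (fun y => y.2) +
        pushTVUnif P (fun y => fun x => xor (y.1 x) (y.2 x)) := by
  classical
  -- per-event bound via uniform tail + TV
  have hb : ∀ g : ((Fin n → Bool) × (Fin n → Bool)) → (Fin n → Bool),
      ∑ y ∈ Finset.univ.filter
          (fun y => (n : ℝ) / 6 ≤ |∑ x, sgn (g y x)|), P y
        ≤ 2 * Real.exp (-(n : ℝ) / 72) + pushTVUnif P g := by
    intro g
    have h := event_le_unif_add_tv P hP0 hP1 g
      (fun v : Fin n → Bool => (n : ℝ) / 6 ≤ |∑ x, sgn (v x)|)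
    have hcard : ((Fintype.card (Fin n → Bool) : ℝ)) = 2 ^ n := by
      rw [show Fintype.card (Fin n → Bool) = 2 ^ n by simp]
      push_cast
      rfl
    have hc : ((Finset.univ.filter
          fun v : Fin n → Bool => (n : ℝ) / 6 ≤ |∑ x, sgn (v x)|).card : ℝ)
          / (Fintype.card (Fin n → Bool) : ℝ) ≤ 2 * Real.exp (-(n : ℝ) / 72) := by
      rw [hcard, div_le_iff₀ (by positivity)]
      have hu := unif_tail n
      linarith
    calc ∑ y ∈ Finset.univ.filter (fun y => (n : ℝ) / 6 ≤ |∑ x, sgn (g y x)|), P y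
        ≤ ((Finset.univ.filter
            fun v : Fin n → Bool => (n : ℝ) / 6 ≤ |∑ x, sgn (v x)|).card : ℝ)
            / (Fintype.card (Fin n → Bool) : ℝ) + pushTVUnif P g := h
      _ ≤ 2 * Real.exp (-(n : ℝ) / 72) + pushTVUnif P g := by linarith
  -- split the event into three
  have hsplit : ∑ y ∈ Finset.univ.filter
        (fun y : (Fin n → Bool) × (Fin n → Bool) =>
          (n : ℝ) / 8 ≤
            |(((Finset.univ.filter fun x : Fin n =>
                y.1 x = false ∧ y.2 x = true).card : ℝ)) - (n : ℝ) / 4|), P y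
      ≤ ∑ y ∈ Finset.univ.filter
            (fun y : (Fin n → Bool) × (Fin n → Bool) =>
              (n : ℝ) / 6 ≤ |∑ x, sgn (y.1 x)|), P y
        + ∑ y ∈ Finset.univ.filter
            (fun y : (Fin n → Bool) × (Fin n → Bool) =>
              (n : ℝ) / 6 ≤ |∑ x, sgn (y.2 x)|), P y
        + ∑ y ∈ Finset.univ.filter
            (fun y : (Fin n → Bool) × (Fin n → Bool) =>
              (n : ℝ) / 6 ≤ |∑ x, sgn (xor (y.1 x) (y.2 x))|), P y := by
    rw [Finset.sum_filter, Finset.sum_filter, Finset.sum_filter, Finset.sum_filter,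
      ← Finset.sum_add_distrib, ← Finset.sum_add_distrib]
    apply Finset.sum_le_sum
    intro y _
    have t1 : (0:ℝ) ≤ if (n : ℝ) / 6 ≤ |∑ x, sgn (y.1 x)| then P y else 0 := by
      split_ifs with h
      · exact hP0 y
      · exact le_rfl
    have t2 : (0:ℝ) ≤ if (n : ℝ) / 6 ≤ |∑ x, sgn (y.2 x)| then P y else 0 := by
      split_ifs with h
      · exact hP0 y
      · exact le_rfl
    have t3 : (0:ℝ) ≤
        if (n : ℝ) / 6 ≤ |∑ x, sgn (xor (y.1 x) (y.2 x))| then P y else 0 := by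
      split_ifs with h
      · exact hP0 y
      · exact le_rfl
    by_cases hAy : (n : ℝ) / 8 ≤
        |(((Finset.univ.filter fun x : Fin n =>
            y.1 x = false ∧ y.2 x = true).card : ℝ)) - (n : ℝ) / 4|
    · rw [if_pos hAy]
      rcases key_cases n y hAy with h | h | h
      · rw [if_pos h] at t1 ⊢
        linarith
      · rw [if_pos h] at t2 ⊢
        linarith
      · rw [if_pos h] at t3 ⊢
        linarith
    · rw [if_neg hAy]
      linarith
  have h1 := hb (fun y => y.1)
  have h2 := hb (fun y => y.2)
  have h3 := hb (fun y => fun x => xor (y.1 x) (y.2 x))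
  calc ∑ y ∈ Finset.univ.filter
        (fun y : (Fin n → Bool) × (Fin n → Bool) =>
          (n : ℝ) / 8 ≤
            |(((Finset.univ.filter fun x : Fin n =>
                y.1 x = false ∧ y.2 x = true).card : ℝ)) - (n : ℝ) / 4|), P y
      ≤ _ := hsplit
    _ ≤ 6 * Real.exp (-(n : ℝ) / 72) +
        pushTVUnif P (fun y => y.1) +
        pushTVUnif P (fun y => y.2) +
        pushTVUnif P (fun y => fun x => xor (y.1 x) (y.2 x)) := by linarith
end

section
/- Let k ≥ 2 and let (X₁, …, X_k) be random vectors in ({0,1}ⁿ)^k with joint law 𝒫. Let N = #{x ∈ [n] : (X₁(x),…,X_k(x)) = (0,…,0,1)}. Then 𝒫(|N − n/2^k| ≥ n/2^{k+1}) ≤ 6 e^{−n/(9·2^{2k−1})} + d_TV((X₁,…,X_{k−1}), π_{k−1}) + d_TV((X₁,…,X_{k−2},X_k), π_{k−1}) + d_TV((X₁,…,X_{k−2},X_{k−1}+X_k), π_{k−1}) + d_TV((X₁,…,X_{k−2}), π_{k−2}), where π_j denotes the uniform measure on ({0,1}ⁿ)^j and vector addition is coordinatewise mod 2. -/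
open Finset


lemma bern_mgf {p : ℝ} (h0 : 0 ≤ p) (h1 : p ≤ 1) (l : ℝ) :
    p * Real.exp (l * (1 - p)) + (1 - p) * Real.exp (-(l * p)) ≤ Real.exp (l ^ 2 / 8) := by
  rcases eq_or_lt_of_le h0 with h0' | h0'
  · rw [← h0']
    simpa using Real.one_le_exp (by positivity)
  rcases eq_or_lt_of_le h1 with h1' | h1'
  · rw [h1']
    simpa using Real.one_le_exp (by positivity)
  have hq : (0:ℝ) < 1 - p := by linarith
  have hD : ∀ x : ℝ, 0 < 1 - p + p * Real.exp x := fun x => by positivity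
  set h : ℝ → ℝ := fun x => x ^ 2 / 8 + x * p - Real.log (1 - p + p * Real.exp x) with hh
  set h' : ℝ → ℝ := fun x => x / 4 + p - p * Real.exp x / (1 - p + p * Real.exp x) with hh'
  have hdD : ∀ x : ℝ, HasDerivAt (fun x : ℝ => 1 - p + p * Real.exp x) (p * Real.exp x) x :=
    fun x => ((Real.hasDerivAt_exp x).const_mul p).const_add (1 - p)
  have hd : ∀ x, HasDerivAt h (h' x) x := by
    intro x
    have e2 := (hdD x).log (ne_of_gt (hD x))
    have e3 : HasDerivAt (fun x : ℝ => x ^ 2 / 8 + x * p) (x / 4 + p) x := by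
      have := ((hasDerivAt_pow 2 x).div_const 8).add ((hasDerivAt_id x).mul_const p)
      refine this.congr_deriv ?_
      push_cast
      ring
    exact e3.sub e2
  have hd' : ∀ x, HasDerivAt h'
      (1 / 4 - (p * Real.exp x / (1 - p + p * Real.exp x)) *
        (1 - p * Real.exp x / (1 - p + p * Real.exp x))) x := by
    intro x
    have e4 : HasDerivAt (fun x : ℝ => p * Real.exp x) (p * Real.exp x) x :=
      (Real.hasDerivAt_exp x).const_mul p
    have e5 := e4.div (hdD x) (ne_of_gt (hD x))
    have e6 : HasDerivAt (fun x : ℝ => x / 4 + p) (1 / 4) x :=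
      ((hasDerivAt_id x).div_const 4).add_const p
    have := e6.sub e5
    refine this.congr_deriv ?_
    have hne := ne_of_gt (hD x)
    field_simp
  have h'0 : h' 0 = 0 := by
    simp only [hh', Real.exp_zero, mul_one]
    have : 1 - p + p = 1 := by ring
    rw [this]
    norm_num
  have hmono : Monotone h' :=
    monotone_of_deriv_nonneg (fun x => (hd' x).differentiableAt)
      (fun x => by
        rw [(hd' x).deriv]
        nlinarith [sq_nonneg (p * Real.exp x / (1 - p + p * Real.exp x) - 1 / 2)])
  have h0eq : h 0 = 0 := by
    simp only [hh, Real.exp_zero, mul_one]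
    have : 1 - p + p = 1 := by ring
    rw [this]
    simp
  have hnonneg : ∀ x, 0 ≤ h x := by
    intro x
    have hdiff : Differentiable ℝ h := fun x => (hd x).differentiableAt
    rcases le_total 0 x with hx | hx
    · have hm : MonotoneOn h (Set.Ici 0) := by
        apply monotoneOn_of_deriv_nonneg (convex_Ici 0) hdiff.continuous.continuousOn
          hdiff.differentiableOn
        intro z hz
        rw [(hd z).deriv, ← h'0]
        exact hmono (le_of_lt (by simpa using hz))
      have := hm (Set.self_mem_Ici) (Set.mem_Ici.2 hx) hx
      linarith [h0eq]
    · have hm : AntitoneOn h (Set.Iic 0) := by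
        apply antitoneOn_of_deriv_nonpos (convex_Iic 0) hdiff.continuous.continuousOn
          hdiff.differentiableOn
        intro z hz
        rw [(hd z).deriv, ← h'0]
        exact hmono (le_of_lt (by simpa using hz))
      have := hm (Set.mem_Iic.2 hx) (Set.self_mem_Iic) hx
      linarith [h0eq]
  have key := hnonneg l
  have hDl := hD l
  have lhs_eq : p * Real.exp (l * (1 - p)) + (1 - p) * Real.exp (-(l * p))
      = Real.exp (Real.log (1 - p + p * Real.exp l) + -(l * p)) := by
    rw [Real.exp_add, Real.exp_log hDl, show l * (1 - p) = l + -(l * p) by ring, Real.exp_add]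
    ring
  rw [lhs_eq]
  apply Real.exp_le_exp.2
  simp only [hh] at key
  linarith


lemma sum_prod_pow {γ : Type*} [Fintype γ] [DecidableEq γ] (n : ℕ) (F : γ → ℝ) :
    ∑ w : Fin n → γ, ∏ x, F (w x) = (∑ c, F c) ^ n := by
  have := Finset.prod_univ_sum (fun _ : Fin n => (univ : Finset γ)) (fun _ c => F c)
  rw [Fintype.piFinset_univ] at this
  rw [← this, Finset.prod_const, Finset.card_univ, Fintype.card_fin]

lemma tail_half {γ : Type*} [Fintype γ] [DecidableEq γ] (n : ℕ) (t l : ℝ) (hl : 0 < l)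
    (φ : γ → ℝ)
    (hmgf : ∑ c, Real.exp (l * φ c) ≤ (Fintype.card γ : ℝ) * Real.exp (l ^ 2 / 8)) :
    ((univ.filter fun w : Fin n → γ => t ≤ ∑ x, φ (w x)).card : ℝ)
      ≤ (Fintype.card γ : ℝ) ^ n * Real.exp ((n : ℝ) * l ^ 2 / 8 - l * t) := by
  set S := univ.filter fun w : Fin n → γ => t ≤ ∑ x, φ (w x) with hS
  have hMnonneg : (0:ℝ) ≤ (Fintype.card γ : ℝ) := by positivity
  have step1 : (S.card : ℝ) * Real.exp (l * t) ≤ ∑ w ∈ S, Real.exp (l * ∑ x, φ (w x)) := by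
    rw [← nsmul_eq_mul]
    apply Finset.card_nsmul_le_sum
    intro w hw
    have := (Finset.mem_filter.1 hw).2
    exact Real.exp_le_exp.2 (mul_le_mul_of_nonneg_left this hl.le)
  have step2 : ∑ w ∈ S, Real.exp (l * ∑ x, φ (w x))
      ≤ ∑ w : Fin n → γ, Real.exp (l * ∑ x, φ (w x)) :=
    Finset.sum_le_sum_of_subset_of_nonneg (Finset.filter_subset _ _)
      (fun _ _ _ => (Real.exp_pos _).le)
  have step3 : ∑ w : Fin n → γ, Real.exp (l * ∑ x, φ (w x)) = (∑ c, Real.exp (l * φ c)) ^ n := by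
    rw [← sum_prod_pow]
    apply Finset.sum_congr rfl
    intro w _
    rw [Finset.mul_sum, Real.exp_sum]
  have step4 : (∑ c, Real.exp (l * φ c)) ^ n
      ≤ ((Fintype.card γ : ℝ) * Real.exp (l ^ 2 / 8)) ^ n := by
    apply pow_le_pow_left₀ (by positivity) hmgf
  have step5 : ((Fintype.card γ : ℝ) * Real.exp (l ^ 2 / 8)) ^ n
      = (Fintype.card γ : ℝ) ^ n * Real.exp ((n : ℝ) * l ^ 2 / 8) := by
    rw [mul_pow, ← Real.exp_nat_mul]
    ring_nf
  have : (S.card : ℝ) * Real.exp (l * t)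
      ≤ (Fintype.card γ : ℝ) ^ n * Real.exp ((n : ℝ) * l ^ 2 / 8) := by
    calc (S.card : ℝ) * Real.exp (l * t) ≤ _ := step1
      _ ≤ _ := step2
      _ = _ := step3
      _ ≤ _ := step4
      _ = _ := step5
  rw [Real.exp_sub, mul_div_assoc' _ _ (Real.exp (l*t)), le_div_iff₀ (Real.exp_pos _)]
  exact this

lemma tail_count {γ : Type*} [Fintype γ] [DecidableEq γ] (n : ℕ) (hn : 0 < n) (c0 : γ)
    (t : ℝ) (ht : 0 < t) :
    ((univ.filter fun w : Fin n → γ =>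
        t ≤ |((univ.filter fun x : Fin n => w x = c0).card : ℝ)
              - (n : ℝ) / (Fintype.card γ : ℝ)|).card : ℝ)
      ≤ (Fintype.card γ : ℝ) ^ n * (2 * Real.exp (-(2 * t ^ 2) / n)) := by
  have : Nonempty γ := ⟨c0⟩
  have hM0 : 0 < (Fintype.card γ : ℝ) := by exact_mod_cast Fintype.card_pos
  have hM1 : (1:ℝ) ≤ (Fintype.card γ : ℝ) := by exact_mod_cast Fintype.card_pos
  set M : ℝ := (Fintype.card γ : ℝ)
  set p : ℝ := 1 / M with hp
  have hp0 : 0 < p := by positivity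
  have hp1 : p ≤ 1 := by rw [hp]; rw [div_le_one hM0]; exact hM1
  have hn0 : (0:ℝ) < (n : ℝ) := by exact_mod_cast hn
  set l : ℝ := 4 * t / n with hl
  have hlpos : 0 < l := by positivity
  -- sum over γ of exp for the plus direction
  have key_sum : ∀ A B : ℝ, ∑ c : γ, (if c = c0 then A else B) = A + (M - 1) * B := by
    intro A B
    rw [← Finset.add_sum_erase _ _ (Finset.mem_univ c0)]
    simp only [if_pos rfl]
    congr 1
    rw [Finset.sum_ite_of_false, Finset.sum_const, Finset.card_erase_of_mem (Finset.mem_univ c0),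
      Finset.card_univ, nsmul_eq_mul]
    · have hc1 : (1:ℕ) ≤ Fintype.card γ := Fintype.card_pos
      rw [Nat.cast_sub hc1]
      push_cast
      ring
    · intro c hc
      exact Finset.ne_of_mem_erase hc
  have mgf_plus : ∑ c : γ, Real.exp (l * ((if c = c0 then (1:ℝ) else 0) - p))
      ≤ M * Real.exp (l ^ 2 / 8) := by
    have e : ∀ c : γ, Real.exp (l * ((if c = c0 then (1:ℝ) else 0) - p))
        = if c = c0 then Real.exp (l * (1 - p)) else Real.exp (-(l * p)) := by
      intro c
      by_cases h : c = c0
      · rw [if_pos h, if_pos h]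
      · rw [if_neg h, if_neg h]
        ring_nf
    rw [Finset.sum_congr rfl (fun c _ => e c), key_sum]
    have hMp : M * p = 1 := by rw [hp, mul_one_div, div_self (ne_of_gt hM0)]
    have := bern_mgf hp0.le hp1 l
    nlinarith [Real.exp_pos (l * (1 - p)), Real.exp_pos (-(l * p))]
  have mgf_minus : ∑ c : γ, Real.exp (l * (p - (if c = c0 then (1:ℝ) else 0)))
      ≤ M * Real.exp (l ^ 2 / 8) := by
    have e : ∀ c : γ, Real.exp (l * (p - (if c = c0 then (1:ℝ) else 0)))
        = if c = c0 then Real.exp (-(l * (1 - p))) else Real.exp (l * p) := by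
      intro c
      by_cases h : c = c0
      · rw [if_pos h, if_pos h]
        ring_nf
      · rw [if_neg h, if_neg h]
        ring_nf
    rw [Finset.sum_congr rfl (fun c _ => e c), key_sum]
    have hMp : M * p = 1 := by rw [hp, mul_one_div, div_self (ne_of_gt hM0)]
    have := bern_mgf (p := 1 - p) (by linarith) (by linarith) l
    have e2 : l * (1 - (1 - p)) = l * p := by ring
    have e3 : -(l * (1 - p)) = -(l * (1-p)) := rfl
    rw [e2] at this
    nlinarith [Real.exp_pos (-(l * (1 - p))), Real.exp_pos (l * p)]
  -- count as a sum
  have hcount : ∀ w : Fin n → γ,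
      ∑ x : Fin n, ((if w x = c0 then (1:ℝ) else 0) - p)
        = ((univ.filter fun x : Fin n => w x = c0).card : ℝ) - (n : ℝ) / M := by
    intro w
    rw [Finset.sum_sub_distrib, Finset.sum_boole, Finset.sum_const, Finset.card_univ,
      Fintype.card_fin, nsmul_eq_mul, hp]
    ring
  have habs : (univ.filter fun w : Fin n → γ =>
        t ≤ |((univ.filter fun x : Fin n => w x = c0).card : ℝ) - (n : ℝ) / M|)
      ⊆ (univ.filter fun w : Fin n → γ =>
          t ≤ ∑ x : Fin n, ((if w x = c0 then (1:ℝ) else 0) - p))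
        ∪ (univ.filter fun w : Fin n → γ =>
          t ≤ ∑ x : Fin n, (p - (if w x = c0 then (1:ℝ) else 0))) := by
    intro w hw
    have hw' := (Finset.mem_filter.1 hw).2
    rw [Finset.mem_union, Finset.mem_filter, Finset.mem_filter]
    rcases le_abs.1 hw' with h | h
    · left
      exact ⟨Finset.mem_univ _, by rw [hcount w]; exact h⟩
    · right
      refine ⟨Finset.mem_univ _, ?_⟩
      have : ∑ x : Fin n, (p - (if w x = c0 then (1:ℝ) else 0))
          = -(∑ x : Fin n, ((if w x = c0 then (1:ℝ) else 0) - p)) := by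
        rw [← Finset.sum_neg_distrib]
        apply Finset.sum_congr rfl
        intro x _
        ring
      rw [this, hcount w]
      exact h
  have bp := tail_half n t l hlpos (fun c => (if c = c0 then (1:ℝ) else 0) - p) mgf_plus
  have bm := tail_half n t l hlpos (fun c => p - (if c = c0 then (1:ℝ) else 0)) mgf_minus
  have hexp : (n : ℝ) * l ^ 2 / 8 - l * t = -(2 * t ^ 2) / n := by
    rw [hl]
    field_simp
    ring
  rw [hexp] at bp bm
  have hcard := Finset.card_le_card habs
  have hcard2 := Finset.card_union_le
    (univ.filter fun w : Fin n → γ =>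
        t ≤ ∑ x : Fin n, ((if w x = c0 then (1:ℝ) else 0) - p))
    (univ.filter fun w : Fin n → γ =>
        t ≤ ∑ x : Fin n, (p - (if w x = c0 then (1:ℝ) else 0)))
  have : (((univ.filter fun w : Fin n → γ =>
      t ≤ |((univ.filter fun x : Fin n => w x = c0).card : ℝ) - (n : ℝ) / M|).card : ℕ) : ℝ)
      ≤ (((univ.filter fun w : Fin n → γ =>
          t ≤ ∑ x : Fin n, ((if w x = c0 then (1:ℝ) else 0) - p)).card : ℕ) : ℝ)
        + (((univ.filter fun w : Fin n → γ =>
          t ≤ ∑ x : Fin n, (p - (if w x = c0 then (1:ℝ) else 0))).card : ℕ) : ℝ) := by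
    push_cast
    exact_mod_cast le_trans (Nat.cast_le.2 hcard) (by exact_mod_cast hcard2)
  calc _ ≤ _ := this
    _ ≤ M ^ n * Real.exp (-(2 * t ^ 2) / n) + M ^ n * Real.exp (-(2 * t ^ 2) / n) := by
        exact add_le_add bp bm
    _ = M ^ n * (2 * Real.exp (-(2 * t ^ 2) / n)) := by ring


lemma pushTVUnif_nonneg {α β : Type*} [Fintype α] [Fintype β] [DecidableEq β]
    (P : α → ℝ) (g : α → β) : 0 ≤ pushTVUnif P g := by
  unfold pushTVUnif
  positivity

lemma filter_sum_le_tv {α β : Type*} [Fintype α] [Fintype β] [DecidableEq β]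
    (P : α → ℝ) (hP0 : ∀ y, 0 ≤ P y) (hP1 : ∑ y, P y = 1) (g : α → β) (B : Finset β) :
    ∑ y ∈ univ.filter (fun y => g y ∈ B), P y
      ≤ (B.card : ℝ) / (Fintype.card β : ℝ) + pushTVUnif P g := by
  have hne : Nonempty α := by
    by_contra h
    rw [not_nonempty_iff] at h
    rw [Finset.univ_eq_empty, Finset.sum_empty] at hP1
    norm_num at hP1
  have hneβ : Nonempty β := ⟨g (Classical.arbitrary α)⟩
  have hcβ : (0:ℝ) < (Fintype.card β : ℝ) := by exact_mod_cast Fintype.card_pos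
  set u : ℝ := 1 / (Fintype.card β : ℝ) with hu
  set Q : β → ℝ := fun z => ∑ y ∈ univ.filter (fun y => g y = z), P y with hQ
  have hQsum : ∑ z, Q z = 1 := by
    rw [hQ, ← hP1]
    simp only
    rw [Finset.sum_fiberwise_eq_sum_filter univ univ g P]
    congr 1
    apply Finset.filter_true_of_mem
    intro y _
    exact Finset.mem_univ _
  have hstep : ∑ y ∈ univ.filter (fun y => g y ∈ B), P y = ∑ z ∈ B, Q z :=
    (Finset.sum_fiberwise_eq_sum_filter univ B g P).symm
  have hsum0 : ∑ z, (Q z - u) = 0 := by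
    rw [Finset.sum_sub_distrib, hQsum, Finset.sum_const, Finset.card_univ, nsmul_eq_mul, hu]
    field_simp
    ring
  rw [hstep]
  calc ∑ z ∈ B, Q z ≤ ∑ z ∈ B, (u + (|Q z - u| + (Q z - u)) / 2) := by
        apply Finset.sum_le_sum
        intro z _
        have := le_abs_self (Q z - u)
        linarith
    _ = B.card * u + ∑ z ∈ B, (|Q z - u| + (Q z - u)) / 2 := by
        rw [Finset.sum_add_distrib, Finset.sum_const, nsmul_eq_mul]
    _ ≤ B.card * u + ∑ z : β, (|Q z - u| + (Q z - u)) / 2 := by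
        apply add_le_add le_rfl
        apply Finset.sum_le_sum_of_subset_of_nonneg (Finset.subset_univ B)
        intro z _ _
        have := neg_abs_le (Q z - u)
        linarith
    _ = B.card * u + ((∑ z : β, |Q z - u|) + ∑ z : β, (Q z - u)) / 2 := by
        rw [← Finset.sum_add_distrib, ← Finset.sum_div]
    _ = (B.card : ℝ) / (Fintype.card β : ℝ) + pushTVUnif P g := by
        rw [hsum0, pushTVUnif, hu]
        ring


def gmap1 (m n : ℕ) : (Fin (m+2) → Fin n → Bool) → (Fin (m+1) → Fin n → Bool) :=
  fun y => fun i : Fin (m+1) => y ⟨i.val, by omega⟩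

def gmap2 (m n : ℕ) : (Fin (m+2) → Fin n → Bool) → (Fin (m+1) → Fin n → Bool) :=
  fun y => fun i : Fin (m+1) =>
    if i.val < m then y ⟨i.val, by omega⟩ else y ⟨m + 1, by omega⟩

def gmap3 (m n : ℕ) : (Fin (m+2) → Fin n → Bool) → (Fin (m+1) → Fin n → Bool) :=
  fun y => fun i : Fin (m+1) =>
    if i.val < m then y ⟨i.val, by omega⟩
    else fun x => xor (y ⟨m, by omega⟩ x) (y ⟨m + 1, by omega⟩ x)

def gmap4 (m n : ℕ) : (Fin (m+2) → Fin n → Bool) → (Fin m → Fin n → Bool) :=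
  fun y => fun i : Fin m => y ⟨i.val, by omega⟩

noncomputable def CntF (m n : ℕ) (z : Fin (m+1) → Fin n → Bool) : ℝ :=
  ((univ.filter fun x : Fin n => ∀ i : Fin (m+1), z i x = decide (i.val = m)).card : ℝ)

-- count identity
lemma cid (m n : ℕ) (y : Fin (m+2) → Fin n → Bool) :
    2 * ((univ.filter fun x : Fin n =>
        ∀ i : Fin (m+2), y i x = decide (i.val = m+1)).card : ℝ)
      = CntF m n (gmap2 m n y) - CntF m n (gmap1 m n y) + CntF m n (gmap3 m n y) := by
  have hm2 : m < m + 2 := by omega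
  have hm12 : m + 1 < m + 2 := by omega
  unfold CntF
  rw [← Finset.sum_boole, ← Finset.sum_boole, ← Finset.sum_boole, ← Finset.sum_boole,
    Finset.mul_sum, ← Finset.sum_sub_distrib, ← Finset.sum_add_distrib]
  apply Finset.sum_congr rfl
  intro x _
  by_cases hpre : ∀ j : Fin (m+2), j.val < m → y j x = false
  · -- equivalences
    have eN : (∀ i : Fin (m+2), y i x = decide (i.val = m+1)) ↔
        (y ⟨m, hm2⟩ x = false ∧ y ⟨m+1, hm12⟩ x = true) := by
      constructor
      · intro hc
        constructor
        · have h := hc ⟨m, hm2⟩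
          have h' : y ⟨m, hm2⟩ x = decide (m = m+1) := h
          rw [decide_eq_false (by omega)] at h'
          exact h'
        · have h := hc ⟨m+1, hm12⟩
          have h' : y ⟨m+1, hm12⟩ x = decide (m+1 = m+1) := h
          rw [decide_eq_true rfl] at h'
          exact h'
      · rintro ⟨ha, hb⟩ i
        by_cases h1 : i.val < m
        · exact (hpre i h1).trans (decide_eq_false (by omega)).symm
        · by_cases h2 : i.val = m
          · have he : y i x = y ⟨m, hm2⟩ x := by
              congr 1
              exact Fin.ext h2
            exact he.trans (ha.trans (decide_eq_false (by omega)).symm)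
          · have h3 : i.val = m + 1 := by omega
            have he : y i x = y ⟨m+1, hm12⟩ x := by
              congr 1
              exact Fin.ext h3
            exact he.trans (hb.trans (decide_eq_true h3).symm)
    have e1 : (∀ i : Fin (m+1), gmap1 m n y i x = decide (i.val = m)) ↔
        (y ⟨m, hm2⟩ x = true) := by
      constructor
      · intro hc
        have h := hc ⟨m, by omega⟩
        have h' : y ⟨m, hm2⟩ x = decide (m = m) := h
        rw [decide_eq_true rfl] at h'
        exact h'
      · intro ha i
        by_cases h1 : i.val < m
        · exact (hpre ⟨i.val, by omega⟩ h1).trans (decide_eq_false (by omega)).symm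
        · have h2 : i.val = m := by omega
          have he : gmap1 m n y i x = y ⟨m, hm2⟩ x := by
            show y ⟨i.val, by omega⟩ x = y ⟨m, hm2⟩ x
            congr 1
            exact Fin.ext h2
          exact he.trans (ha.trans (decide_eq_true h2).symm)
    have e2 : (∀ i : Fin (m+1), gmap2 m n y i x = decide (i.val = m)) ↔
        (y ⟨m+1, hm12⟩ x = true) := by
      constructor
      · intro hc
        have h := hc ⟨m, by omega⟩
        have h' : (if m < m then y ⟨m, hm2⟩ else y ⟨m+1, hm12⟩) x = decide (m = m) := h
        rw [if_neg (lt_irrefl m), decide_eq_true rfl] at h'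
        exact h'
      · intro hb i
        show (if i.val < m then y ⟨i.val, by omega⟩ else y ⟨m+1, by omega⟩) x
          = decide (i.val = m)
        by_cases h1 : i.val < m
        · rw [if_pos h1]
          exact (hpre ⟨i.val, by omega⟩ h1).trans (decide_eq_false (by omega)).symm
        · rw [if_neg h1]
          have h2 : i.val = m := by omega
          exact hb.trans (decide_eq_true h2).symm
    have e3 : (∀ i : Fin (m+1), gmap3 m n y i x = decide (i.val = m)) ↔
        (xor (y ⟨m, hm2⟩ x) (y ⟨m+1, hm12⟩ x) = true) := by
      constructor
      · intro hc
        have h := hc ⟨m, by omega⟩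
        have h' : (if m < m then y ⟨m, hm2⟩
            else fun x' => xor (y ⟨m, hm2⟩ x') (y ⟨m+1, hm12⟩ x')) x = decide (m = m) := h
        rw [if_neg (lt_irrefl m), decide_eq_true rfl] at h'
        exact h'
      · intro hb i
        show (if i.val < m then y ⟨i.val, by omega⟩
            else fun x' => xor (y ⟨m, by omega⟩ x') (y ⟨m+1, by omega⟩ x')) x
          = decide (i.val = m)
        by_cases h1 : i.val < m
        · rw [if_pos h1]
          exact (hpre ⟨i.val, by omega⟩ h1).trans (decide_eq_false (by omega)).symm
        · rw [if_neg h1]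
          have h2 : i.val = m := by omega
          exact hb.trans (decide_eq_true h2).symm
    cases ha : y ⟨m, hm2⟩ x <;> cases hb : y ⟨m+1, hm12⟩ x
    · -- a = false, b = false
      rw [if_neg (fun hc => by have h := (eN.1 hc).2; rw [hb] at h; simp at h),
        if_neg (fun hc => by have h := e2.1 hc; rw [hb] at h; simp at h),
        if_neg (fun hc => by have h := e1.1 hc; rw [ha] at h; simp at h),
        if_neg (fun hc => by have h := e3.1 hc; rw [ha, hb] at h; simp at h)]
      norm_num
    · -- a = false, b = true
      rw [if_pos (eN.2 ⟨ha, hb⟩),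
        if_pos (e2.2 hb),
        if_neg (fun hc => by have h := e1.1 hc; rw [ha] at h; simp at h),
        if_pos (e3.2 (by rw [ha, hb]; simp))]
      norm_num
    · -- a = true, b = false
      rw [if_neg (fun hc => by have h := (eN.1 hc).1; rw [ha] at h; simp at h),
        if_neg (fun hc => by have h := e2.1 hc; rw [hb] at h; simp at h),
        if_pos (e1.2 ha),
        if_pos (e3.2 (by rw [ha, hb]; simp))]
      norm_num
    · -- a = true, b = true
      rw [if_neg (fun hc => by have h := (eN.1 hc).1; rw [ha] at h; simp at h),
        if_pos (e2.2 hb),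
        if_pos (e1.2 ha),
        if_neg (fun hc => by have h := e3.1 hc; rw [ha, hb] at h; simp at h)]
      norm_num
  · -- prefix fails : all four conditions false
    push_neg at hpre
    obtain ⟨j, hj1, hj2'⟩ := hpre
    have hj2 : y j x = true := by
      revert hj2'
      cases y j x <;> simp
    have hNf : ¬(∀ i : Fin (m+2), y i x = decide (i.val = m+1)) := by
      intro hc
      have h := hc j
      rw [hj2, decide_eq_false (show ¬(j.val = m+1) by omega)] at h
      simp at h
    have hjeq : ∀ (pf : (j.val : ℕ) < m + 2), y ⟨j.val, pf⟩ x = true := by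
      intro pf
      have : (⟨j.val, pf⟩ : Fin (m+2)) = j := Fin.ext rfl
      rw [this, hj2]
    have h1f : ¬(∀ i : Fin (m+1), gmap1 m n y i x = decide (i.val = m)) := by
      intro hc
      have h := hc ⟨j.val, by omega⟩
      have h' : y ⟨j.val, by omega⟩ x = decide ((j.val : ℕ) = m) := h
      rw [hjeq _, decide_eq_false (show ¬((j.val:ℕ) = m) by omega)] at h'
      simp at h'
    have h2f : ¬(∀ i : Fin (m+1), gmap2 m n y i x = decide (i.val = m)) := by
      intro hc
      have h := hc ⟨j.val, by omega⟩
      have h' : (if (j.val : ℕ) < m then y ⟨j.val, by omega⟩ else y ⟨m+1, by omega⟩) x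
          = decide ((j.val : ℕ) = m) := h
      rw [if_pos hj1, hjeq _, decide_eq_false (show ¬((j.val:ℕ) = m) by omega)] at h'
      simp at h'
    have h3f : ¬(∀ i : Fin (m+1), gmap3 m n y i x = decide (i.val = m)) := by
      intro hc
      have h := hc ⟨j.val, by omega⟩
      have h' : (if (j.val : ℕ) < m then y ⟨j.val, by omega⟩
          else fun x' => xor (y ⟨m, by omega⟩ x') (y ⟨m+1, by omega⟩ x')) x
          = decide ((j.val : ℕ) = m) := h
      rw [if_pos hj1, hjeq _, decide_eq_false (show ¬((j.val:ℕ) = m) by omega)] at h'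
      simp at h'
    rw [if_neg hNf, if_neg h1f, if_neg h2f, if_neg h3f]
    norm_num

lemma master (m n : ℕ) (P : (Fin (m + 2) → Fin n → Bool) → ℝ)
    (hP0 : ∀ y, 0 ≤ P y) (hP1 : ∑ y, P y = 1) :
    ∑ y ∈ Finset.univ.filter
        (fun y : Fin (m + 2) → Fin n → Bool =>
          (n : ℝ) / 2 ^ (m + 3) ≤
            |(((Finset.univ.filter fun x : Fin n =>
                ∀ i : Fin (m + 2), y i x = decide (i.val = m + 1)).card : ℝ))
              - (n : ℝ) / 2 ^ (m + 2)|),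
        P y
      ≤ 6 * Real.exp (-(n : ℝ) / (9 * 2 ^ (2 * m + 3))) +
        pushTVUnif P (gmap1 m n) + pushTVUnif P (gmap2 m n) +
        pushTVUnif P (gmap3 m n) + pushTVUnif P (gmap4 m n) := by
  have fin6 : ∀ L D E T1 T2 T3 T4 : ℝ, 0 ≤ T4 →
      L ≤ (D + T1) + ((D + T2) + (D + T3)) → D ≤ 2 * E →
      L ≤ 6 * E + T1 + T2 + T3 + T4 := by
    intro L D E T1 T2 T3 T4 h1 h2 h3
    linarith
  rcases Nat.eq_zero_or_pos n with hn | hn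
  · -- n = 0 : trivial bound since total mass is 1 ≤ 6
    subst hn
    have hL : ∑ y ∈ Finset.univ.filter
        (fun y : Fin (m + 2) → Fin 0 → Bool =>
          ((0:ℕ) : ℝ) / 2 ^ (m + 3) ≤
            |(((Finset.univ.filter fun x : Fin 0 =>
                ∀ i : Fin (m + 2), y i x = decide (i.val = m + 1)).card : ℝ))
              - ((0:ℕ) : ℝ) / 2 ^ (m + 2)|),
        P y ≤ 1 := by
      rw [← hP1]
      exact Finset.sum_le_sum_of_subset_of_nonneg (Finset.filter_subset _ _)
        (fun y _ _ => hP0 y)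
    have hE : Real.exp (-((0:ℕ) : ℝ) / (9 * 2 ^ (2 * m + 3))) = 1 := by
      norm_num
    refine fin6 _ 1 _ _ _ _ (pushTVUnif P (gmap4 m 0)) (pushTVUnif_nonneg P _) ?_ ?_
    · have u1 := pushTVUnif_nonneg P (gmap1 m 0)
      have u2 := pushTVUnif_nonneg P (gmap2 m 0)
      have u3 := pushTVUnif_nonneg P (gmap3 m 0)
      linarith
    · rw [hE]; norm_num
  -- main case n > 0
  have hn0 : (0:ℝ) < (n:ℝ) := by exact_mod_cast hn
  set t : ℝ := (n:ℝ) / (3 * 2 ^ (m + 2)) with ht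
  have htpos : 0 < t := by positivity
  have hcardγ : ((Fintype.card (Fin (m+1) → Bool)) : ℝ) = 2 ^ (m+1) := by
    rw [Fintype.card_fun]
    norm_num
  set mu : ℝ := (n : ℝ) / (Fintype.card (Fin (m+1) → Bool) : ℝ) with hmu
  have hmu' : mu = (n : ℝ) / 2 ^ (m+1) := by rw [hmu, hcardγ]
  set B : Finset (Fin (m+1) → Fin n → Bool) :=
    univ.filter (fun z => t ≤ |CntF m n z - mu|) with hB
  -- the Hoeffding bound for B
  have hbij : B.card = (univ.filter fun w : Fin n → (Fin (m+1) → Bool) =>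
      t ≤ |((univ.filter fun x : Fin n =>
          w x = fun i : Fin (m+1) => decide (i.val = m)).card : ℝ) - mu|).card := by
    apply Finset.card_equiv (Equiv.piComm (fun (_ : Fin (m+1)) (_ : Fin n) => Bool))
    intro z
    simp only [hB, Finset.mem_filter, Finset.mem_univ, true_and]
    have : (univ.filter fun x : Fin n => ∀ i : Fin (m+1), z i x = decide (i.val = m))
        = (univ.filter fun x : Fin n =>
            (Equiv.piComm (fun (_ : Fin (m+1)) (_ : Fin n) => Bool) z) x
              = fun i : Fin (m+1) => decide (i.val = m)) := by
      apply Finset.filter_congr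
      intro x _
      rw [funext_iff]
      rfl
    simp only [CntF]
    rw [this]
  have hcard_co : ((Fintype.card (Fin (m+1) → Fin n → Bool)) : ℝ)
      = ((Fintype.card (Fin (m+1) → Bool)) : ℝ) ^ n := by
    have h1 : Fintype.card (Fin (m+1) → Fin n → Bool)
        = Fintype.card (Fin (m+1) → Bool) ^ n := by
      rw [Fintype.card_fun, Fintype.card_fun, Fintype.card_fun]
      simp [← pow_mul, mul_comm]
    rw [h1]
    push_cast
    ring
  have hexp2 : -(2 * t ^ 2) / (n:ℝ) = -(n : ℝ) / (9 * 2 ^ (2 * m + 3)) := by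
    rw [ht]
    have h24 : (2:ℝ) ^ (m+2) * 2 ^ (m+2) = 2 * 2 ^ (2*m+3) := by
      rw [← pow_add, show (m+2)+(m+2) = (2*m+3)+1 by ring, pow_succ']
    have hp2 : (0:ℝ) < 2 ^ (m+2) := by positivity
    have hp3 : (0:ℝ) < 2 ^ (2*m+3) := by positivity
    field_simp
    nlinarith [sq_nonneg ((n:ℝ))]
  have h5 : (B.card : ℝ) / ((Fintype.card (Fin (m+1) → Fin n → Bool)) : ℝ)
      ≤ 2 * Real.exp (-(n : ℝ) / (9 * 2 ^ (2 * m + 3))) := by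
    rw [hbij, hcard_co]
    have htc := tail_count (γ := Fin (m+1) → Bool) n hn
      (fun i : Fin (m+1) => decide (i.val = m)) t htpos
    rw [← hmu] at htc
    rw [hexp2] at htc
    have hX : (0:ℝ) < ((Fintype.card (Fin (m+1) → Bool)) : ℝ) ^ n := by
      rw [hcardγ]; positivity
    rw [div_le_iff₀ hX]
    calc _ ≤ _ := htc
      _ = _ := by ring
  -- the splitting
  have key : ∀ y : Fin (m+2) → Fin n → Bool,
      (n : ℝ) / 2 ^ (m + 3) ≤
        |(((Finset.univ.filter fun x : Fin n =>
            ∀ i : Fin (m + 2), y i x = decide (i.val = m + 1)).card : ℝ))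
          - (n : ℝ) / 2 ^ (m + 2)| →
      (gmap1 m n y ∈ B ∨ gmap2 m n y ∈ B ∨ gmap3 m n y ∈ B) := by
    intro y hbad
    by_contra hcon
    push_neg at hcon
    obtain ⟨hc1, hc2, hc3⟩ := hcon
    simp only [hB, Finset.mem_filter, Finset.mem_univ, true_and, not_le] at hc1 hc2 hc3
    have hcid := cid m n y
    have h1 : (2:ℝ)^(m+2) = 2^(m+1) * 2 := pow_succ 2 (m+1)
    have h2 : (2:ℝ)^(m+3) = 2^(m+2) * 2 := pow_succ 2 (m+2)
    have hp1 : (0:ℝ) < 2^(m+1) := by positivity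
    have hp2 : (0:ℝ) < 2^(m+2) := by positivity
    have hmu2 : 2 * ((n:ℝ) / 2^(m+2)) = (n:ℝ) / 2^(m+1) := by
      rw [h1]
      field_simp
    have h3t : 3 * t = (n:ℝ) / 2^(m+2) := by
      rw [ht]
      field_simp
    have h23 : 2 * ((n:ℝ)/2^(m+3)) = (n:ℝ)/2^(m+2) := by
      rw [h2]
      field_simp
    set N : ℝ := (((Finset.univ.filter fun x : Fin n =>
        ∀ i : Fin (m + 2), y i x = decide (i.val = m + 1)).card : ℝ)) with hN
    set A : ℝ := CntF m n (gmap2 m n y) - mu with hA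
    set C1 : ℝ := CntF m n (gmap1 m n y) - mu with hA1
    set C3 : ℝ := CntF m n (gmap3 m n y) - mu with hA3
    have heq : A - C1 + C3 = 2 * N - 2 * ((n:ℝ)/2^(m+2)) := by
      rw [hA, hA1, hA3, hmu']
      linear_combination hmu2 - hcid
    have tri : |A - C1 + C3| ≤ |A| + |C1| + |C3| := by
      calc |A - C1 + C3| ≤ |A - C1| + |C3| := abs_add_le _ _
        _ ≤ (|A| + |C1|) + |C3| := by
            have : |A - C1| ≤ |A| + |C1| := by
              rw [sub_eq_add_neg]
              exact (abs_add_le _ _).trans (by rw [abs_neg])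
            linarith
        _ = |A| + |C1| + |C3| := by ring
    have low : 2 * ((n:ℝ)/2^(m+3)) ≤ |2 * N - 2 * ((n:ℝ)/2^(m+2))| := by
      rw [show (2:ℝ) * N - 2 * ((n:ℝ)/2^(m+2)) = 2 * (N - (n:ℝ)/2^(m+2)) by ring,
        abs_mul, abs_two]
      exact mul_le_mul_of_nonneg_left hbad (by norm_num)
    rw [← heq] at low
    linarith [tri, hc1, hc2, hc3, low]
  have split : ∑ y ∈ Finset.univ.filter
      (fun y : Fin (m + 2) → Fin n → Bool =>
        (n : ℝ) / 2 ^ (m + 3) ≤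
          |(((Finset.univ.filter fun x : Fin n =>
              ∀ i : Fin (m + 2), y i x = decide (i.val = m + 1)).card : ℝ))
            - (n : ℝ) / 2 ^ (m + 2)|),
      P y
      ≤ (∑ y ∈ univ.filter (fun y => gmap1 m n y ∈ B), P y)
        + ((∑ y ∈ univ.filter (fun y => gmap2 m n y ∈ B), P y)
          + (∑ y ∈ univ.filter (fun y => gmap3 m n y ∈ B), P y)) := by
    rw [Finset.sum_filter, Finset.sum_filter, Finset.sum_filter, Finset.sum_filter,
      ← Finset.sum_add_distrib, ← Finset.sum_add_distrib]
    apply Finset.sum_le_sum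
    intro y _
    have hite : ∀ (c : Prop) (inst : Decidable c), (0:ℝ) ≤ (if c then P y else 0) := by
      intro c inst
      split_ifs
      · exact hP0 y
      · exact le_rfl
    by_cases hbad : (n : ℝ) / 2 ^ (m + 3) ≤
        |(((Finset.univ.filter fun x : Fin n =>
            ∀ i : Fin (m + 2), y i x = decide (i.val = m + 1)).card : ℝ))
          - (n : ℝ) / 2 ^ (m + 2)|
    · rw [if_pos hbad]
      rcases key y hbad with h | h | h
      · rw [if_pos h]
        linarith [hite (gmap2 m n y ∈ B) inferInstance, hite (gmap3 m n y ∈ B) inferInstance]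
      · rw [if_pos h]
        linarith [hite (gmap1 m n y ∈ B) inferInstance, hite (gmap3 m n y ∈ B) inferInstance]
      · rw [if_pos h]
        linarith [hite (gmap1 m n y ∈ B) inferInstance, hite (gmap2 m n y ∈ B) inferInstance]
    · rw [if_neg hbad]
      have g1 := hite (gmap1 m n y ∈ B) inferInstance
      have g2 := hite (gmap2 m n y ∈ B) inferInstance
      have g3 := hite (gmap3 m n y ∈ B) inferInstance
      linarith
  have s1 := filter_sum_le_tv P hP0 hP1 (gmap1 m n) B
  have s2 := filter_sum_le_tv P hP0 hP1 (gmap2 m n) B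
  have s3 := filter_sum_le_tv P hP0 hP1 (gmap3 m n) B
  exact fin6 _ ((B.card : ℝ) / ((Fintype.card (Fin (m+1) → Fin n → Bool)) : ℝ)) _ _ _ _ _
    (pushTVUnif_nonneg P _)
    (le_trans split (add_le_add s1 (add_le_add s2 s3))) h5

/-- For `k ≥ 2` random vectors `(X₁,…,X_k)` in `({0,1}ⁿ)^k` with joint law `P`
and `N = #{x : (X₁(x),…,X_k(x)) = (0,…,0,1)}`,
`P(|N − n/2^k| ≥ n/2^{k+1}) ≤ 6 e^{−n/(9·2^{2k−1})}
  + d_TV((X₁,…,X_{k−1}),π_{k−1}) + d_TV((X₁,…,X_{k−2},X_k),π_{k−1})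
  + d_TV((X₁,…,X_{k−2},X_{k−1}+X_k),π_{k−1}) + d_TV((X₁,…,X_{k−2}),π_{k−2})`,
where `π_j` is the uniform measure on `({0,1}ⁿ)^j` and addition is coordinatewise mod 2. -/
theorem pattern_concentration (k n : ℕ) (hk : 2 ≤ k)
    (P : (Fin k → Fin n → Bool) → ℝ)
    (hP0 : ∀ y, 0 ≤ P y) (hP1 : ∑ y, P y = 1) :
    ∑ y ∈ Finset.univ.filter
        (fun y : Fin k → Fin n → Bool =>
          (n : ℝ) / 2 ^ (k + 1) ≤
            |(((Finset.univ.filter fun x : Fin n =>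
                ∀ i : Fin k, y i x = decide (i.val = k - 1)).card : ℝ)) - (n : ℝ) / 2 ^ k|),
        P y
      ≤ 6 * Real.exp (-(n : ℝ) / (9 * 2 ^ (2 * k - 1))) +
        pushTVUnif P (fun y => fun i : Fin (k - 1) =>
          y ⟨i.val, by have := i.isLt; omega⟩) +
        pushTVUnif P (fun y => fun i : Fin (k - 1) =>
          if i.val < k - 2 then y ⟨i.val, by have := i.isLt; omega⟩ else y ⟨k - 1, by omega⟩) +
        pushTVUnif P (fun y => fun i : Fin (k - 1) =>
          if i.val < k - 2 then y ⟨i.val, by have := i.isLt; omega⟩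
          else fun x => xor (y ⟨k - 2, by omega⟩ x) (y ⟨k - 1, by omega⟩ x)) +
        pushTVUnif P (fun y => fun i : Fin (k - 2) =>
          y ⟨i.val, by have := i.isLt; omega⟩) := by
  obtain ⟨m, rfl⟩ : ∃ m, k = m + 2 := ⟨k - 2, by omega⟩
  exact master m n P hP0 hP1
end
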